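/- Suppose D₁ and D₂ are functions, each holomorphic on ℂ minus (the real axis and a finite set of complex poles), each tending to 0 as |z| → ∞, and suppose D₁(iω_n) = D₂(iω_n) for every Matsubara frequency ω_n = 2πn/β, n ∈ ℤ \ {0}. Then D₁ = D₂ on the complement of the real axis and their pole sets coincide. -/

import Mathlib

open Complex Filter Set Topology

noncomputable def phiH (ζ : ℂ) : ℂ := (ζ^2 + 2*I*ζ + 1)/(ζ^2 - 2*I*ζ + 1)

def HD : Set ℂ := {ζ : ℂ | 0 < ζ.im ∧ ‖ζ‖ < 1}

noncomputable def mob (u v : ℂ) : ℂ := (v - u)/(1 - (starRingEnd ℂ) u * v)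

noncomputable def Bf (a ζ : ℂ) : ℂ := mob (phiH a) (phiH ζ)

lemma isOpen_HD : IsOpen HD :=
  (isOpen_lt continuous_const Complex.continuous_im).inter
    (isOpen_lt continuous_norm continuous_const)

lemma den_factor (ζ : ℂ) : ζ^2 - 2*I*ζ + 1
    = (ζ - I*(1+Real.sqrt 2)) * (ζ - I*(1-Real.sqrt 2)) := by
  have h2 : ((Real.sqrt 2 : ℝ) : ℂ)^2 = 2 := by
    norm_cast; exact Real.sq_sqrt (by norm_num)
  linear_combination Complex.I_sq + Complex.I^2 * h2

lemma den_lower {ζ : ℂ} (him : 0 ≤ ζ.im) (habs : ‖ζ‖ ≤ 1) :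
    1/2 ≤ ‖ζ^2 - 2*I*ζ + 1‖ := by
  set s := Real.sqrt 2 with hs
  have hs2 : s^2 = 2 := Real.sq_sqrt (by norm_num)
  have hs0 : 0 ≤ s := Real.sqrt_nonneg 2
  have hs1 : 1 ≤ s := by nlinarith
  have hA : s ≤ ‖ζ - I*(1+(s:ℂ))‖ := by
    have h1 : ‖(I*(1+(s:ℂ)))‖ = 1 + s := by
      rw [norm_mul, Complex.norm_I, one_mul]
      have : (1 + (s:ℂ)) = ((1+s : ℝ) : ℂ) := by push_cast; ring
      rw [this, Complex.norm_real, Real.norm_eq_abs]; exact _root_.abs_of_nonneg (by linarith)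
    have h2 := norm_sub_norm_le (I*(1+(s:ℂ))) ζ
    rw [h1] at h2
    have : ‖I*(1+(s:ℂ)) - ζ‖ = ‖ζ - I*(1+(s:ℂ))‖ := norm_sub_rev _ _
    linarith
  have hB : s - 1 ≤ ‖ζ - I*(1-(s:ℂ))‖ := by
    have him2 : (ζ - I*(1-(s:ℂ))).im = ζ.im - (1 - s) := by
      simp [Complex.sub_im, Complex.mul_im]
    have h3 : |(ζ - I*(1-(s:ℂ))).im| ≤ ‖ζ - I*(1-(s:ℂ))‖ := Complex.abs_im_le_norm _
    rw [him2] at h3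
    have : s - 1 ≤ |ζ.im - (1 - s)| := by
      rw [_root_.abs_of_nonneg (by linarith)]; linarith
    linarith
  have := den_factor ζ
  rw [this, norm_mul]
  have hBnn : (0:ℝ) ≤ s - 1 := by linarith
  nlinarith [norm_nonneg (ζ - I*(1+(s:ℂ))), norm_nonneg (ζ - I*(1-(s:ℂ)))]

lemma key_id (ζ : ℂ) : normSq (ζ^2 + 2*I*ζ + 1) - normSq (ζ^2 - 2*I*ζ + 1)
    = 8 * ζ.im * (normSq ζ - 1) := by
  simp only [Complex.normSq_apply, pow_two, Complex.add_re, Complex.add_im, Complex.sub_re,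
    Complex.sub_im, Complex.mul_re, Complex.mul_im, Complex.I_re, Complex.I_im,
    Complex.one_re, Complex.one_im, Complex.re_ofNat, Complex.im_ofNat]
  ring

lemma den_ne {ζ : ℂ} (him : 0 ≤ ζ.im) (habs : ‖ζ‖ ≤ 1) : ζ^2 - 2*I*ζ + 1 ≠ 0 := by
  intro h
  have := den_lower him habs
  rw [h] at this; simp at this; linarith

lemma one_sub_normSq_phiH {ζ : ℂ} (him : 0 ≤ ζ.im) (habs : ‖ζ‖ ≤ 1) :
    1 - ‖phiH ζ‖^2 = 8 * ζ.im * (1 - normSq ζ) / normSq (ζ^2 - 2*I*ζ + 1) := by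
  have hden := den_ne him habs
  have hd0 : normSq (ζ^2 - 2*I*ζ + 1) ≠ 0 := by
    simpa [Complex.normSq_eq_zero] using hden
  rw [phiH, norm_div, div_pow, ← Complex.normSq_eq_norm_sq, ← Complex.normSq_eq_norm_sq]
  rw [eq_div_iff hd0, sub_mul, div_mul_cancel₀ _ hd0]
  linarith [key_id ζ]

lemma abs_phiH_lt_one {ζ : ℂ} (hζ : ζ ∈ HD) : ‖phiH ζ‖ < 1 := by
  obtain ⟨him, habs⟩ := hζ
  have h := one_sub_normSq_phiH him.le habs.le
  have hpos : 0 < 8 * ζ.im * (1 - normSq ζ) / normSq (ζ^2 - 2*I*ζ + 1) := by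
    apply div_pos
    · have : normSq ζ < 1 := by
        rw [Complex.normSq_eq_norm_sq]; nlinarith [norm_nonneg ζ]
      nlinarith
    · have := den_lower him.le habs.le
      rw [Complex.normSq_eq_norm_sq]; nlinarith
  nlinarith [norm_nonneg (phiH ζ)]

lemma phiH_boundary {ζ : ℂ} (him : 0 < ζ.im) (habs : ‖ζ‖ < 1) :
    1 - ‖phiH ζ‖^2 ≤ 32 * ζ.im * (1 - normSq ζ) := by
  have h := one_sub_normSq_phiH him.le habs.le
  have hd : (1:ℝ)/4 ≤ normSq (ζ^2 - 2*I*ζ + 1) := by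
    have := den_lower him.le habs.le
    rw [Complex.normSq_eq_norm_sq]; nlinarith
  have hnum : 0 ≤ 8 * ζ.im * (1 - normSq ζ) := by
    have : normSq ζ ≤ 1 := by
      rw [Complex.normSq_eq_norm_sq]; nlinarith [norm_nonneg ζ]
    nlinarith
  rw [h, div_le_iff₀ (by linarith)]
  nlinarith

lemma phiH_inj {ζ₁ ζ₂ : ℂ} (h1 : ζ₁ ∈ HD) (h2 : ζ₂ ∈ HD) (he : phiH ζ₁ = phiH ζ₂) :
    ζ₁ = ζ₂ := by
  have hd1 := den_ne h1.1.le h1.2.le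
  have hd2 := den_ne h2.1.le h2.2.le
  rw [phiH, phiH, div_eq_div_iff hd1 hd2] at he
  have key : (4*I) * ((ζ₁ - ζ₂) * (1 - ζ₁*ζ₂)) = 0 := by linear_combination he
  have h4I : (4*I : ℂ) ≠ 0 := by simp [Complex.I_ne_zero]
  rcases mul_eq_zero.1 key with h | h
  · exact absurd h h4I
  rcases mul_eq_zero.1 h with h | h
  · exact sub_eq_zero.1 h
  · exfalso
    have : ζ₁ * ζ₂ = 1 := by linear_combination -h
    have h1' : ‖ζ₁ * ζ₂‖ < 1 := by
      rw [norm_mul]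
      calc ‖ζ₁‖ * ‖ζ₂‖ ≤ ‖ζ₁‖ * 1 := by
            exact mul_le_mul_of_nonneg_left h2.2.le (norm_nonneg _)
        _ < 1 := by rw [mul_one]; exact h1.2
    rw [this] at h1'; simp at h1'

lemma differentiableAt_phiH {ζ : ℂ} (hζ : ζ ∈ HD) : DifferentiableAt ℂ phiH ζ := by
  apply DifferentiableAt.div
  · fun_prop
  · fun_prop
  · exact den_ne hζ.1.le hζ.2.le

lemma hasDerivAt_phiH {ζ : ℂ} (hζ : ζ ∈ HD) :
    HasDerivAt phiH ((4*I*(1 - ζ^2)) / (ζ^2 - 2*I*ζ + 1)^2) ζ := by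
  have hden := den_ne hζ.1.le hζ.2.le
  have h1 : HasDerivAt (fun ζ : ℂ => ζ^2 + 2*I*ζ + 1) (2*ζ + 2*I) ζ := by
    have := ((hasDerivAt_pow 2 ζ).add (((hasDerivAt_id ζ).const_mul (2*I)))).add_const 1
    refine this.congr_deriv ?_; norm_num
  have h2 : HasDerivAt (fun ζ : ℂ => ζ^2 - 2*I*ζ + 1) (2*ζ - 2*I) ζ := by
    have := ((hasDerivAt_pow 2 ζ).sub (((hasDerivAt_id ζ).const_mul (2*I)))).add_const 1
    refine this.congr_deriv ?_; norm_num
  have := h1.div h2 hden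
  refine this.congr_deriv ?_
  rw [div_eq_div_iff (pow_ne_zero _ hden) (pow_ne_zero _ hden)]
  ring

lemma mob_id (u v : ℂ) :
    normSq (1 - (starRingEnd ℂ) u * v) - normSq (v - u) = (1 - normSq u)*(1 - normSq v) := by
  have h : ((normSq (1 - (starRingEnd ℂ) u * v) : ℂ)) - (normSq (v - u) : ℂ)
      = (1 - (normSq u : ℂ))*(1 - (normSq v : ℂ)) := by
    rw [← Complex.mul_conj, ← Complex.mul_conj, ← Complex.mul_conj, ← Complex.mul_conj]
    simp only [map_sub, map_mul, map_one, Complex.conj_conj]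
    ring
  exact_mod_cast h

lemma mob_den_ne {u v : ℂ} (hu : ‖u‖ < 1) (hv : ‖v‖ ≤ 1) :
    (1 - (starRingEnd ℂ) u * v) ≠ 0 := by
  intro h
  have h1 : ‖(starRingEnd ℂ) u * v‖ < 1 := by
    rw [norm_mul, RCLike.norm_conj]
    calc ‖u‖ * ‖v‖ ≤ ‖u‖ * 1 := mul_le_mul_of_nonneg_left hv (norm_nonneg _)
      _ < 1 := by rwa [mul_one]
  have : (1 : ℂ) = (starRingEnd ℂ) u * v := by linear_combination h
  rw [← this] at h1; simp at h1

lemma mob_den_lower {u v : ℂ} (hu : ‖u‖ < 1) (hv : ‖v‖ ≤ 1) :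
    1 - ‖u‖ ≤ ‖1 - (starRingEnd ℂ) u * v‖ := by
  have h2 := norm_sub_norm_le (1 : ℂ) ((starRingEnd ℂ) u * v)
  rw [norm_one, norm_mul, RCLike.norm_conj] at h2
  have : ‖u‖ * ‖v‖ ≤ ‖u‖ := by
    calc ‖u‖ * ‖v‖ ≤ ‖u‖ * 1 := mul_le_mul_of_nonneg_left hv (norm_nonneg _)
      _ = ‖u‖ := mul_one _
  linarith

lemma mob_den_upper (u v : ℂ) (hu : ‖u‖ ≤ 1) (hv : ‖v‖ ≤ 1) :
    ‖1 - (starRingEnd ℂ) u * v‖ ≤ 2 := by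
  calc ‖1 - (starRingEnd ℂ) u * v‖ ≤ ‖(1:ℂ)‖ + ‖(starRingEnd ℂ) u * v‖ := norm_sub_le _ _
    _ ≤ 1 + 1 := by
        rw [norm_one, norm_mul, RCLike.norm_conj]
        have : ‖u‖ * ‖v‖ ≤ 1 * 1 := mul_le_mul hu hv (norm_nonneg _) zero_le_one
        linarith
    _ = 2 := by norm_num

lemma normSq_mob (u v : ℂ) (hu : ‖u‖ < 1) (hv : ‖v‖ ≤ 1) :
    normSq (mob u v) = normSq (v - u) / normSq (1 - (starRingEnd ℂ) u * v) := by
  rw [mob, Complex.normSq_div]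

-- upper bound: ‖mob u v‖² ≤ 1 - (1-nsq u)(1-nsq v)/4
lemma normSq_mob_le {u v : ℂ} (hu : ‖u‖ < 1) (hv : ‖v‖ ≤ 1) :
    normSq (mob u v) ≤ 1 - (1 - normSq u)*(1 - normSq v)/4 := by
  have hden := mob_den_ne hu hv
  have hd0 : 0 < normSq (1 - (starRingEnd ℂ) u * v) := by
    rwa [Complex.normSq_pos]
  have hd4 : normSq (1 - (starRingEnd ℂ) u * v) ≤ 4 := by
    have := mob_den_upper u v hu.le hv
    rw [Complex.normSq_eq_norm_sq]; nlinarith [norm_nonneg (1 - (starRingEnd ℂ) u * v)]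
  have hid := mob_id u v
  have hnn : 0 ≤ (1 - normSq u)*(1 - normSq v) := by
    have h1 : normSq u ≤ 1 := by
      rw [Complex.normSq_eq_norm_sq]; nlinarith [norm_nonneg u]
    have h2 : normSq v ≤ 1 := by
      rw [Complex.normSq_eq_norm_sq]; nlinarith [norm_nonneg v]
    nlinarith
  rw [normSq_mob u v hu hv, div_le_iff₀ hd0]
  nlinarith [Complex.normSq_nonneg (v - u)]

-- lower bound: 1 - ‖mob u v‖² ≤ (1-nsq u)(1-nsq v)/(1-‖u‖)²
lemma one_sub_normSq_mob_le {u v : ℂ} (hu : ‖u‖ < 1) (hv : ‖v‖ ≤ 1) :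
    1 - normSq (mob u v) ≤ (1 - normSq u)*(1 - normSq v)/(1-‖u‖)^2 := by
  have hden := mob_den_ne hu hv
  have hd0 : 0 < normSq (1 - (starRingEnd ℂ) u * v) := by rwa [Complex.normSq_pos]
  have hdl : (1-‖u‖)^2 ≤ normSq (1 - (starRingEnd ℂ) u * v) := by
    have := mob_den_lower hu hv
    rw [Complex.normSq_eq_norm_sq]
    have h1 : (0:ℝ) ≤ 1 - ‖u‖ := by linarith
    nlinarith
  have hu2 : (0:ℝ) < (1-‖u‖)^2 := by nlinarith
  have hid := mob_id u v
  have hnn : 0 ≤ (1 - normSq u)*(1 - normSq v) := by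
    have h1 : normSq u ≤ 1 := by
      rw [Complex.normSq_eq_norm_sq]; nlinarith [norm_nonneg u]
    have h2 : normSq v ≤ 1 := by
      rw [Complex.normSq_eq_norm_sq]; nlinarith [norm_nonneg v]
    nlinarith
  rw [normSq_mob u v hu hv]
  have e1 : 1 - normSq (v - u) / normSq (1 - (starRingEnd ℂ) u * v)
      = ((1 - normSq u)*(1 - normSq v)) / normSq (1 - (starRingEnd ℂ) u * v) := by
    rw [eq_div_iff hd0.ne', sub_mul, div_mul_cancel₀ _ hd0.ne']
    linarith [hid]
  rw [e1]
  gcongr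

lemma norm_mob_lt_one {u v : ℂ} (hu : ‖u‖ < 1) (hv : ‖v‖ < 1) : ‖mob u v‖ < 1 := by
  have h := normSq_mob_le hu hv.le
  have hpos : 0 < (1 - normSq u)*(1 - normSq v) := by
    have h1 : normSq u < 1 := by
      rw [Complex.normSq_eq_norm_sq]; nlinarith [norm_nonneg u]
    have h2 : normSq v < 1 := by
      rw [Complex.normSq_eq_norm_sq]; nlinarith [norm_nonneg v]
    nlinarith
  rw [Complex.normSq_eq_norm_sq] at h
  nlinarith [norm_nonneg (mob u v)]

lemma mob_eq_zero_iff {u v : ℂ} (hu : ‖u‖ < 1) (hv : ‖v‖ ≤ 1) :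
    mob u v = 0 ↔ v = u := by
  rw [mob, div_eq_zero_iff]
  constructor
  · rintro (h | h)
    · exact sub_eq_zero.1 h
    · exact absurd h (mob_den_ne hu hv)
  · intro h; left; rw [h, sub_self]

lemma mob_deriv_ne {u : ℂ} (hu : ‖u‖ < 1) :
    ∃ d : ℂ, d ≠ 0 ∧ HasDerivAt (fun w => mob u w) d u := by
  have hden := mob_den_ne hu hu.le
  have h1 : HasDerivAt (fun w : ℂ => w - u) 1 u := (hasDerivAt_id u).sub_const u
  have h2 : HasDerivAt (fun w : ℂ => 1 - (starRingEnd ℂ) u * w) (-(starRingEnd ℂ) u) u := by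
    have := ((hasDerivAt_id u).const_mul ((starRingEnd ℂ) u)).const_sub 1
    simpa using this
  have h := h1.div h2 hden
  refine ⟨_, ?_, h⟩
  have hnum : (1 * (1 - (starRingEnd ℂ) u * u) - (u - u) * -(starRingEnd ℂ) u)
      = (1 - (starRingEnd ℂ) u * u) := by ring
  rw [hnum]
  apply div_ne_zero hden (pow_ne_zero _ hden)

-- Blaschke factor on HD with zero at a

lemma Bf_diff {a : ℂ} (ha : a ∈ HD) : DifferentiableOn ℂ (Bf a) HD := by
  intro ζ hζ
  apply DifferentiableAt.differentiableWithinAt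
  have hu : ‖phiH a‖ < 1 := abs_phiH_lt_one ha
  have hv : ‖phiH ζ‖ < 1 := abs_phiH_lt_one hζ
  have hd := differentiableAt_phiH hζ
  unfold Bf mob
  exact (hd.sub_const _).div (((hd.const_mul _).const_sub 1)) (mob_den_ne hu hv.le)

lemma Bf_zero_iff {a ζ : ℂ} (ha : a ∈ HD) (hζ : ζ ∈ HD) : Bf a ζ = 0 ↔ ζ = a := by
  rw [Bf, mob_eq_zero_iff (abs_phiH_lt_one ha) (abs_phiH_lt_one hζ).le]
  constructor
  · exact fun h => phiH_inj hζ ha h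
  · rintro rfl; rfl

lemma Bf_self {a : ℂ} (ha : a ∈ HD) : Bf a a = 0 := (Bf_zero_iff ha ha).2 rfl

lemma deriv_Bf_ne {a : ℂ} (ha : a ∈ HD) : deriv (Bf a) a ≠ 0 := by
  obtain ⟨d, hd0, hd⟩ := mob_deriv_ne (abs_phiH_lt_one ha)
  have hΦ := hasDerivAt_phiH ha
  have hcomp : HasDerivAt (Bf a) (d * ((4*I*(1 - a^2)) / (a^2 - 2*I*a + 1)^2)) a := by
    exact HasDerivAt.comp a hd hΦ
  rw [hcomp.deriv]
  apply mul_ne_zero hd0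
  apply div_ne_zero
  · have ha2 : ‖a^2‖ < 1 := by
      rw [norm_pow]
      exact pow_lt_one₀ (norm_nonneg a) ha.2 (by norm_num)
    intro h
    have : a^2 = 1 := by linear_combination (I/4)*h - (1-a^2)*Complex.I_sq
    rw [this] at ha2; simp at ha2
  · exact pow_ne_zero _ (den_ne ha.1.le ha.2.le)

lemma dslope_Bf_ne {a ζ : ℂ} (ha : a ∈ HD) (hζ : ζ ∈ HD) : dslope (Bf a) a ζ ≠ 0 := by
  rcases eq_or_ne ζ a with rfl | hne
  · rw [dslope_same]; exact deriv_Bf_ne ha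
  · rw [dslope_of_ne _ hne, slope_def_field, Bf_self ha, sub_zero]
    apply div_ne_zero
    · rw [Ne, Bf_zero_iff ha hζ]; exact hne
    · exact sub_ne_zero.2 hne

/-- factor out N Blaschke factors -/
lemma blaschke_factor_out (f : ℂ → ℂ) (hf : DifferentiableOn ℂ f HD) (a : ℕ → ℂ)
    (ha : ∀ n, a n ∈ HD) (hinj : Function.Injective a) (hz : ∀ n, f (a n) = 0) (N : ℕ) :
    ∃ g, DifferentiableOn ℂ g HD ∧ ∀ ζ ∈ HD, f ζ = g ζ * ∏ k ∈ Finset.range N, Bf (a k) ζ := by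
  induction N with
  | zero => exact ⟨f, hf, fun ζ _ => by simp⟩
  | succ N ih =>
    obtain ⟨g, hg, hfg⟩ := ih
    have hgN : g (a N) = 0 := by
      have h0 := hz N
      rw [hfg (a N) (ha N)] at h0
      rcases mul_eq_zero.1 h0 with h | h
      · exact h
      · exfalso
        obtain ⟨k, hk, hBk⟩ := Finset.prod_eq_zero_iff.1 h
        have hNk : N = k := hinj ((Bf_zero_iff (ha k) (ha N)).1 hBk)
        have := Finset.mem_range.1 hk
        omega
    set g' : ℂ → ℂ := fun ζ => dslope g (a N) ζ / dslope (Bf (a N)) (a N) ζ with hg'def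
    have hmem : HD ∈ 𝓝 (a N) := isOpen_HD.mem_nhds (ha N)
    have hg'diff : DifferentiableOn ℂ g' HD := by
      apply DifferentiableOn.div
      · exact (Complex.differentiableOn_dslope hmem).2 hg
      · exact (Complex.differentiableOn_dslope hmem).2 (Bf_diff (ha N))
      · exact fun ζ hζ => dslope_Bf_ne (ha N) hζ
    refine ⟨g', hg'diff, fun ζ hζ => ?_⟩
    have hkey : g ζ = g' ζ * Bf (a N) ζ := by
      rcases eq_or_ne ζ (a N) with rfl | hne
      · rw [hgN, Bf_self (ha N), mul_zero]
      · rw [hg'def]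
        simp only
        rw [dslope_of_ne _ hne, dslope_of_ne _ hne, slope_def_field, slope_def_field,
          hgN, Bf_self (ha N), sub_zero, sub_zero]
        have hB : Bf (a N) ζ ≠ 0 := by rw [Ne, Bf_zero_iff (ha N) hζ]; exact hne
        have hne' : ζ - a N ≠ 0 := sub_ne_zero.2 hne
        field_simp
    rw [hfg ζ hζ, Finset.prod_range_succ, hkey]; ring

lemma blaschke_bound (f : ℂ → ℂ) (hf : DifferentiableOn ℂ f HD) (M : ℝ)
    (hM : ∀ ζ ∈ HD, ‖f ζ‖ ≤ M) (a : ℕ → ℂ) (ha : ∀ n, a n ∈ HD)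
    (hinj : Function.Injective a) (hz : ∀ n, f (a n) = 0) (N : ℕ) {z : ℂ} (hzH : z ∈ HD) :
    ‖f z‖ ≤ M * ∏ k ∈ Finset.range N, ‖Bf (a k) z‖ := by
  obtain ⟨g, hg, hfg⟩ := blaschke_factor_out f hf a ha hinj hz N
  suffices hgz : ‖g z‖ ≤ M by
    rw [hfg z hzH, norm_mul, norm_prod]
    exact mul_le_mul_of_nonneg_right hgz (Finset.prod_nonneg fun k _ => norm_nonneg _)
  -- auxiliary quantities
  set e : ℕ → ℝ := fun k => (1 - normSq (phiH (a k)))/(1 - ‖phiH (a k)‖)^2 with he_def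
  have he_nonneg : ∀ k, 0 ≤ e k := by
    intro k
    apply div_nonneg
    · have h1 : ‖phiH (a k)‖ < 1 := abs_phiH_lt_one (ha k)
      rw [Complex.normSq_eq_norm_sq]
      nlinarith [norm_nonneg (phiH (a k))]
    · positivity
  set E : ℝ := 1 + ∑ k ∈ Finset.range N, e k with hE_def
  have hE1 : 1 ≤ E := by
    have : 0 ≤ ∑ k ∈ Finset.range N, e k := Finset.sum_nonneg fun k _ => he_nonneg k
    simp [hE_def]; linarith
  have hEk : ∀ k ∈ Finset.range N, e k ≤ E := by
    intro k hk
    have h1 : e k ≤ ∑ j ∈ Finset.range N, e j :=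
      Finset.single_le_sum (fun j _ => he_nonneg j) hk
    simp [hE_def]; linarith
  have key : ∀ ε ∈ Set.Ioo (0:ℝ) 1, ‖g z‖ ≤ M / Real.sqrt (1-ε) ^ N := by
    rintro ε ⟨hε0, hε1⟩
    set δ : ℝ := min (min (z.im/2) ((1 - ‖z‖)/2)) (ε/(64*E)) with hδ_def
    have hδ0 : 0 < δ := by
      apply lt_min (lt_min (by linarith [hzH.1]) (by linarith [hzH.2]))
      positivity
    have hδim : δ ≤ z.im/2 := le_trans (min_le_left _ _) (min_le_left _ _)
    have hδnorm : δ ≤ (1 - ‖z‖)/2 := le_trans (min_le_left _ _) (min_le_right _ _)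
    have hδε : δ ≤ ε/(64*E) := min_le_right _ _
    set S : Set ℂ := {ζ : ℂ | δ < ζ.im ∧ ‖ζ‖ < 1 - δ} with hS_def
    have hSopen : IsOpen S :=
      (isOpen_lt continuous_const Complex.continuous_im).inter
        (isOpen_lt continuous_norm continuous_const)
    have hSsub : S ⊆ HD := fun ζ hζ => ⟨lt_trans hδ0 hζ.1, lt_of_lt_of_le hζ.2 (by linarith)⟩
    have hzS : z ∈ S := by
      constructor
      · have := hzH.1; linarith
      · have := hzH.2; linarith
    have hK : closure S ⊆ {ζ : ℂ | δ ≤ ζ.im ∧ ‖ζ‖ ≤ 1 - δ} := by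
      apply closure_minimal
      · exact fun ζ hζ => ⟨hζ.1.le, hζ.2.le⟩
      · exact (isClosed_le continuous_const Complex.continuous_im).inter
          (isClosed_le continuous_norm continuous_const)
    have hclos : closure S ⊆ HD := fun ζ hζ => by
      have h := hK hζ
      exact ⟨lt_of_lt_of_le hδ0 h.1, lt_of_le_of_lt h.2 (by linarith)⟩
    have hbd : Bornology.IsBounded S := by
      apply (Metric.isBounded_ball (x := (0:ℂ)) (r := 2)).subset
      intro ζ hζ
      rw [Metric.mem_ball, dist_zero_right]
      have := hζ.2; linarith
    -- frontier bound
    have hfront : ∀ ζ ∈ frontier S, ζ.im * (1 - normSq ζ) ≤ 2*δ := by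
      intro ζ hζf
      have hcl : ζ ∈ closure S := frontier_subset_closure hζf
      have hKζ := hK hcl
      have hnotS : ζ ∉ S := by
        rw [hSopen.frontier_eq] at hζf
        exact hζf.2
      have hnsq0 : 0 ≤ normSq ζ := Complex.normSq_nonneg ζ
      have him1 : ζ.im ≤ 1 := by
        have h1 : |ζ.im| ≤ ‖ζ‖ := Complex.abs_im_le_norm ζ
        have h2 : ‖ζ‖ ≤ 1 - δ := hKζ.2
        have := abs_le.1 h1
        linarith
      rcases not_and_or.1 hnotS with h | h
      · push_neg at h
        have him : ζ.im = δ := le_antisymm h hKζ.1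
        have : normSq ζ ≥ 0 := hnsq0
        rw [him]; nlinarith
      · push_neg at h
        have hnormζ : ‖ζ‖ = 1 - δ := le_antisymm hKζ.2 h
        have hnsq : normSq ζ = (1-δ)^2 := by
          rw [Complex.normSq_eq_norm_sq, hnormζ]
        have hδ1 : δ ≤ 1 := by
          have := norm_nonneg ζ; rw [hnormζ] at this; linarith
        rw [hnsq]
        have him0 : 0 ≤ ζ.im := le_trans hδ0.le hKζ.1
        have hge : (0:ℝ) ≤ 1 - (1-δ)^2 := by nlinarith
        nlinarith [mul_le_mul_of_nonneg_right him1 hge]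
    -- each Blaschke factor is large on the frontier
    have hBlarge : ∀ k ∈ Finset.range N, ∀ ζ ∈ frontier S, Real.sqrt (1-ε) ≤ ‖Bf (a k) ζ‖ := by
      intro k hk ζ hζf
      have hζHD : ζ ∈ HD := hclos (frontier_subset_closure hζf)
      have hu : ‖phiH (a k)‖ < 1 := abs_phiH_lt_one (ha k)
      have hv : ‖phiH ζ‖ < 1 := abs_phiH_lt_one hζHD
      have h1 := one_sub_normSq_mob_le hu hv.le
      have h2 := phiH_boundary hζHD.1 hζHD.2
      have h3 := hfront ζ hζf
      have h4 : 1 - normSq (phiH ζ) ≤ 64 * δ := by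
        rw [Complex.normSq_eq_norm_sq]; nlinarith
      have h5 : (1 - normSq (phiH (a k)))*(1 - normSq (phiH ζ))/(1-‖phiH (a k)‖)^2
          ≤ E * (64*δ) := by
        have hek := hEk k hk
        have hnn : 0 ≤ 1 - normSq (phiH ζ) := by
          rw [Complex.normSq_eq_norm_sq]; nlinarith [norm_nonneg (phiH ζ)]
        have he_eq : (1 - normSq (phiH (a k)))*(1 - normSq (phiH ζ))/(1-‖phiH (a k)‖)^2
            = e k * (1 - normSq (phiH ζ)) := by
          rw [he_def]; ring
        rw [he_eq]
        have := he_nonneg k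
        nlinarith
    -- conclude  normSq (Bf (a k) ζ) ≥ 1 - ε
      have h6 : E * (64*δ) ≤ ε := by
        have h7 : 64 * E * δ ≤ 64 * E * (ε/(64*E)) := by
          apply mul_le_mul_of_nonneg_left hδε
          nlinarith
        have h8 : 64 * E * (ε/(64*E)) = ε := by
          field_simp
        nlinarith
      have h9 : 1 - ε ≤ normSq (Bf (a k) ζ) := by
        unfold Bf; nlinarith
      have h10 : normSq (Bf (a k) ζ) = ‖Bf (a k) ζ‖^2 := Complex.normSq_eq_norm_sq _
      rw [h10] at h9
      calc Real.sqrt (1-ε) ≤ Real.sqrt (‖Bf (a k) ζ‖^2) := Real.sqrt_le_sqrt h9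
        _ = ‖Bf (a k) ζ‖ := Real.sqrt_sq (norm_nonneg _)
    -- bound for g on the frontier
    have hgfront : ∀ ζ ∈ frontier S, ‖g ζ‖ ≤ M / Real.sqrt (1-ε)^N := by
      intro ζ hζf
      have hζHD : ζ ∈ HD := hclos (frontier_subset_closure hζf)
      have hprod : Real.sqrt (1-ε)^N ≤ ∏ k ∈ Finset.range N, ‖Bf (a k) ζ‖ := by
        have h := Finset.prod_le_prod (f := fun _ : ℕ => Real.sqrt (1-ε))
          (g := fun k => ‖Bf (a k) ζ‖) (s := Finset.range N)
          (fun k _ => Real.sqrt_nonneg _) (fun k hk => hBlarge k hk ζ hζf)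
        simpa [Finset.prod_const, Finset.card_range] using h
      have hfζ : ‖f ζ‖ = ‖g ζ‖ * ∏ k ∈ Finset.range N, ‖Bf (a k) ζ‖ := by
        rw [hfg ζ hζHD, norm_mul, norm_prod]
      have hsq : 0 < Real.sqrt (1-ε)^N := by
        apply pow_pos (Real.sqrt_pos.2 (by linarith))
      rw [le_div_iff₀ hsq]
      calc ‖g ζ‖ * Real.sqrt (1-ε)^N ≤ ‖g ζ‖ * ∏ k ∈ Finset.range N, ‖Bf (a k) ζ‖ :=
            mul_le_mul_of_nonneg_left hprod (norm_nonneg _)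
        _ = ‖f ζ‖ := hfζ.symm
        _ ≤ M := hM ζ hζHD
    have hdc : DiffContOnCl ℂ g S := ⟨hg.mono hSsub, (hg.continuousOn).mono hclos⟩
    exact Complex.norm_le_of_forall_mem_frontier_norm_le hbd hdc hgfront (subset_closure hzS)
  -- take ε → 0⁺
  have htend : Tendsto (fun ε : ℝ => M / Real.sqrt (1-ε)^N) (𝓝[>] 0) (𝓝 M) := by
    have hc : ContinuousAt (fun ε : ℝ => M / Real.sqrt (1-ε)^N) 0 := by
      apply ContinuousAt.div continuousAt_const
      · exact ((Real.continuous_sqrt.comp (continuous_const.sub continuous_id)).pow N).continuousAt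
      · simp
    have h := tendsto_nhdsWithin_of_tendsto_nhds (s := Set.Ioi (0:ℝ)) hc.tendsto
    have he : M / Real.sqrt (1-(0:ℝ))^N = M := by
      norm_num [Real.sqrt_one]
    rwa [he] at h
  refine ge_of_tendsto htend ?_
  filter_upwards [Ioo_mem_nhdsGT_of_mem (⟨le_refl (0:ℝ), by norm_num⟩ : (0:ℝ) ∈ Set.Ico (0:ℝ) 1)]
    with ε hε
  exact key ε hε

lemma phi_it {t : ℝ} (ht0 : 0 < t) (ht5 : t ≤ 2/5) :
    t ≤ 1 - normSq (phiH (I*(t:ℂ))) := by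
  have hnum : (I*(t:ℂ))^2 + 2*I*(I*(t:ℂ)) + 1 = ((1 - t^2 - 2*t : ℝ) : ℂ) := by
    push_cast
    linear_combination ((t:ℂ)^2+2*t)*Complex.I_sq
  have hden : (I*(t:ℂ))^2 - 2*I*(I*(t:ℂ)) + 1 = ((1 - t^2 + 2*t : ℝ) : ℂ) := by
    push_cast
    linear_combination ((t:ℂ)^2-2*t)*Complex.I_sq
  have hval : phiH (I*(t:ℂ)) = ((1 - t^2 - 2*t : ℝ) : ℂ)/((1 - t^2 + 2*t : ℝ) : ℂ) := by
    rw [phiH, hnum, hden]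
  rw [hval, Complex.normSq_div, Complex.normSq_ofReal, Complex.normSq_ofReal]
  set A : ℝ := 1 - t^2 - 2*t with hA
  set B : ℝ := 1 - t^2 + 2*t with hB
  have hApos : 0 < A := by rw [hA]; nlinarith
  have hBpos : 0 < B := by rw [hB]; nlinarith
  have hX : A*A/(B*B) ≤ 1 - t := by
    rw [div_le_iff₀ (by positivity : (0:ℝ) < B*B)]
    rw [hA, hB]
    nlinarith [sq_nonneg t, sq_nonneg (1-t), sq_nonneg (t*(1-t)), sq_nonneg (t*t)]
  linarith

lemma blaschke_vanish (f : ℂ → ℂ) (hf : DifferentiableOn ℂ f HD) (M : ℝ)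
    (hM : ∀ ζ ∈ HD, ‖f ζ‖ ≤ M) (c : ℝ) (hc : 0 < c) (N₁ : ℕ) (hN₁ : 0 < N₁)
    (hsmall : c/N₁ ≤ 2/5) (hz : ∀ n : ℕ, N₁ ≤ n → f (I*((c:ℂ)/n)) = 0) :
    ∀ z ∈ HD, f z = 0 := by
  intro z hzH
  set t : ℕ → ℝ := fun k => c/(N₁+k) with ht_def
  have ht0 : ∀ k, 0 < t k := by
    intro k; apply div_pos hc
    have : (0:ℝ) < N₁ := by exact_mod_cast hN₁
    positivity
  have ht5 : ∀ k, t k ≤ 2/5 := by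
    intro k
    have h1 : (N₁:ℝ) ≤ N₁ + k := by
      have : (0:ℝ) ≤ k := Nat.cast_nonneg k
      linarith
    have hN₁pos : (0:ℝ) < N₁ := by exact_mod_cast hN₁
    calc c/(N₁+k : ℝ) ≤ c/(N₁:ℝ) := by
          apply div_le_div_of_nonneg_left hc.le hN₁pos h1
      _ ≤ 2/5 := hsmall
  set a : ℕ → ℂ := fun k => I*((t k : ℝ) : ℂ) with ha_def
  have haH : ∀ k, a k ∈ HD := by
    intro k
    constructor
    · show 0 < (I*((t k : ℝ):ℂ)).im
      simp [Complex.mul_im]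
      exact ht0 k
    · show ‖I*((t k : ℝ):ℂ)‖ < 1
      rw [norm_mul, Complex.norm_I, one_mul, Complex.norm_real, Real.norm_eq_abs,
        _root_.abs_of_nonneg (ht0 k).le]
      linarith [ht5 k]
  have hinj : Function.Injective a := by
    intro m n hmn
    rw [ha_def] at hmn
    simp only at hmn
    have h1 : ((t m : ℝ):ℂ) = ((t n : ℝ):ℂ) := mul_left_cancel₀ Complex.I_ne_zero hmn
    have h2 : t m = t n := by exact_mod_cast h1
    rw [ht_def] at h2
    simp only at h2
    have hN₁pos : (0:ℝ) < N₁ := by exact_mod_cast hN₁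
    have hm : (0:ℝ) < N₁ + m := by positivity
    have hn : (0:ℝ) < N₁ + n := by positivity
    rw [div_eq_div_iff hm.ne' hn.ne'] at h2
    have : (N₁ + n : ℝ) = (N₁ + m : ℝ) := by
      have := mul_left_cancel₀ (ne_of_gt hc) h2
      linarith [this]
    have : (m:ℝ) = n := by linarith
    exact_mod_cast this
  have hfz : ∀ k, f (a k) = 0 := by
    intro k
    have h1 : a k = I*((c:ℂ)/((N₁+k : ℕ) : ℂ)) := by
      rw [ha_def]
      simp only
      congr 1
      rw [ht_def]
      push_cast
      ring
    rw [h1]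
    exact hz (N₁+k) (Nat.le_add_right N₁ k)
  -- setup for limit
  set v : ℂ := phiH z with hv_def
  have hv : ‖v‖ < 1 := abs_phiH_lt_one hzH
  set q : ℝ := (1 - normSq v)/4 with hq_def
  have hq0 : 0 < q := by
    rw [hq_def]
    have : normSq v < 1 := by
      rw [Complex.normSq_eq_norm_sq]; nlinarith [norm_nonneg v]
    linarith
  -- individual factor bound
  have hfac : ∀ k, ‖Bf (a k) z‖ ≤ Real.exp (-(q/2) * t k) := by
    intro k
    have hu : ‖phiH (a k)‖ < 1 := abs_phiH_lt_one (haH k)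
    have h1 := normSq_mob_le hu hv.le
    have h2 : t k ≤ 1 - normSq (phiH (a k)) := by
      have := phi_it (ht0 k) (ht5 k)
      rw [ha_def]
      simpa using this
    have h3 : normSq (Bf (a k) z) ≤ 1 - q * t k := by
      have h4 : (1 - normSq (phiH (a k)))*(1 - normSq v)/4 ≥ t k * q := by
        rw [hq_def]
        have h5 : 0 ≤ 1 - normSq v := by
          rw [Complex.normSq_eq_norm_sq]; nlinarith [norm_nonneg v]
        have h6 := ht0 k
        nlinarith
      unfold Bf
      rw [← hv_def]
      nlinarith
    have h7 : 1 - q * t k ≤ Real.exp (-(q * t k)) := by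
      have := Real.add_one_le_exp (-(q * t k))
      linarith
    have h8 : ‖Bf (a k) z‖^2 ≤ (Real.exp (-(q/2) * t k))^2 := by
      have h9 : (Real.exp (-(q/2) * t k))^2 = Real.exp (-(q * t k)) := by
        rw [sq, ← Real.exp_add]; congr 1; ring
      rw [h9, ← Complex.normSq_eq_norm_sq]
      linarith
    nlinarith [norm_nonneg (Bf (a k) z), Real.exp_pos (-(q/2) * t k)]
  -- product bound
  have hbound : ∀ N : ℕ, ‖f z‖ ≤ M * Real.exp (-(q/2) * ∑ k ∈ Finset.range N, t k) := by
    intro N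
    have h1 := blaschke_bound f hf M hM a haH hinj hfz N hzH
    have h2 : ∏ k ∈ Finset.range N, ‖Bf (a k) z‖
        ≤ ∏ k ∈ Finset.range N, Real.exp (-(q/2) * t k) :=
      Finset.prod_le_prod (fun k _ => norm_nonneg _) (fun k _ => hfac k)
    have h3 : ∏ k ∈ Finset.range N, Real.exp (-(q/2) * t k)
        = Real.exp (-(q/2) * ∑ k ∈ Finset.range N, t k) := by
      rw [← Real.exp_sum, Finset.mul_sum]
    have hM0 : 0 ≤ M := le_trans (norm_nonneg _) (hM z hzH)
    calc ‖f z‖ ≤ M * ∏ k ∈ Finset.range N, ‖Bf (a k) z‖ := h1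
      _ ≤ M * Real.exp (-(q/2) * ∑ k ∈ Finset.range N, t k) := by
          rw [← h3]
          exact mul_le_mul_of_nonneg_left h2 hM0
  -- divergence of the sum
  have hdiv : Tendsto (fun N => ∑ k ∈ Finset.range N, t k) atTop atTop := by
    have hN₁pos : (0:ℝ) < N₁ := by exact_mod_cast hN₁
    have hcmp : ∀ N, (c/(N₁+1)) * ∑ k ∈ Finset.range N, (1/(k+1) : ℝ)
        ≤ ∑ k ∈ Finset.range N, t k := by
      intro N
      rw [Finset.mul_sum]
      apply Finset.sum_le_sum
      intro k _
      rw [ht_def]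
      simp only
      rw [div_mul_div_comm, mul_one]
      apply div_le_div_of_nonneg_left hc.le
      · positivity
      · have h1 : (0:ℝ) ≤ k := Nat.cast_nonneg k
        have h2 : (1:ℝ) ≤ N₁ := by exact_mod_cast hN₁
        nlinarith
    apply tendsto_atTop_mono hcmp
    apply Tendsto.const_mul_atTop (by positivity : (0:ℝ) < c/(N₁+1))
    exact Real.tendsto_sum_range_one_div_nat_succ_atTop
  -- conclude
  have hlim : Tendsto (fun N => M * Real.exp (-(q/2) * ∑ k ∈ Finset.range N, t k))
      atTop (𝓝 0) := by
    have h1 : Tendsto (fun N => -(q/2) * ∑ k ∈ Finset.range N, t k) atTop atBot := by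
      apply Tendsto.const_mul_atTop_of_neg (by linarith : -(q/2) < 0) hdiv
    have h2 := Real.tendsto_exp_atBot.comp h1
    have h3 := h2.const_mul M
    simpa using h3
  have h4 : ‖f z‖ ≤ 0 := ge_of_tendsto hlim (Eventually.of_forall hbound)
  have := norm_nonneg (f z)
  exact norm_eq_zero.1 (le_antisymm h4 this)

-- line through two points has measure zero
lemma line_null (p₁ p₂ : ℂ) : MeasureTheory.volume {w : ℂ | ∃ s : ℝ, w = p₁ + s•(p₂ - p₁)} = 0 := by
  have hset : {w : ℂ | ∃ s : ℝ, w = p₁ + s•(p₂ - p₁)}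
      = (fun w => p₁ + w) '' ((Submodule.span ℝ {p₂ - p₁} : Submodule ℝ ℂ) : Set ℂ) := by
    ext w
    simp only [Set.mem_setOf_eq, Set.mem_image, SetLike.mem_coe, Submodule.mem_span_singleton]
    constructor
    · rintro ⟨s, rfl⟩; exact ⟨s•(p₂-p₁), ⟨s, rfl⟩, rfl⟩
    · rintro ⟨x, ⟨s, rfl⟩, rfl⟩; exact ⟨s, rfl⟩
  rw [hset]
  have himg : (fun w => p₁ + w) '' ((Submodule.span ℝ {p₂ - p₁} : Submodule ℝ ℂ) : Set ℂ)
      = (fun w => -p₁ + w) ⁻¹' ((Submodule.span ℝ {p₂ - p₁} : Submodule ℝ ℂ) : Set ℂ) := by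
    ext w
    simp only [Set.mem_image, Set.mem_preimage]
    constructor
    · rintro ⟨x, hx, rfl⟩; simpa using hx
    · intro h; exact ⟨-p₁ + w, h, by ring⟩
  rw [himg, MeasureTheory.measure_preimage_add]
  apply MeasureTheory.Measure.addHaar_submodule
  intro htop
  rcases eq_or_ne (p₂ - p₁) 0 with h0 | h0
  · rw [h0] at htop
    simp at htop
  · have h1 : Module.finrank ℝ (Submodule.span ℝ {p₂ - p₁} : Submodule ℝ ℂ) = 1 :=
      finrank_span_singleton h0
    rw [htop] at h1
    rw [finrank_top, Complex.finrank_real_complex] at h1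
    norm_num at h1

lemma convex_open_diff_finite_joined (U : Set ℂ) (hUc : Convex ℝ U) (hUo : IsOpen U)
    (F : Finset ℂ) {x y : ℂ} (hx : x ∈ U \ (F : Set ℂ)) (hy : y ∈ U \ (F : Set ℂ)) :
    JoinedIn (U \ (F : Set ℂ)) x y := by
  obtain ⟨r, hr0, hball⟩ := Metric.isOpen_iff.1 hUo x hx.1
  set L : ℂ → ℂ → Set ℂ := fun p q => {w : ℂ | ∃ s : ℝ, w = p + s•(q - p)} with hL
  set Bad : Set ℂ := ⋃ p ∈ F, (L x p ∪ L y p) with hBad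
  have hBadnull : MeasureTheory.volume Bad = 0 := by
    rw [hBad]
    refine le_antisymm ?_ zero_le
    calc MeasureTheory.volume (⋃ p ∈ F, (L x p ∪ L y p))
        ≤ ∑ p ∈ F, MeasureTheory.volume (L x p ∪ L y p) := MeasureTheory.measure_biUnion_finset_le F _
      _ ≤ ∑ p ∈ F, (0:ENNReal) := by
          apply Finset.sum_le_sum
          intro p _
          calc MeasureTheory.volume (L x p ∪ L y p)
              ≤ MeasureTheory.volume (L x p) + MeasureTheory.volume (L y p) :=
                MeasureTheory.measure_union_le _ _
            _ = 0 := by rw [hL]; rw [line_null, line_null]; simp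
      _ = 0 := by simp
  have hex : ∃ w, w ∈ Metric.ball x r ∧ w ∉ Bad := by
    by_contra hcon
    push_neg at hcon
    have hsub : Metric.ball x r ⊆ Bad := fun w hw => hcon w hw
    have := MeasureTheory.measure_mono (μ := MeasureTheory.volume) hsub
    rw [hBadnull] at this
    have hpos := Metric.measure_ball_pos MeasureTheory.volume x hr0
    exact absurd (le_antisymm this zero_le) (ne_of_gt hpos)
  obtain ⟨w, hwball, hwBad⟩ := hex
  have hwU : w ∈ U := hball hwball
  -- segments avoid F
  have hseg : ∀ v : ℂ, v ∈ U \ (F : Set ℂ) → segment ℝ v w ⊆ Bad → False := fun _ _ h => hwBad (h (right_mem_segment ℝ _ _))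
  have hsegx : segment ℝ x w ⊆ U \ (F : Set ℂ) := by
    intro p hp
    refine ⟨hUc.segment_subset hx.1 hwU hp, ?_⟩
    intro hpF
    rw [segment_eq_image'] at hp
    obtain ⟨t, ht, rfl⟩ := hp
    rcases eq_or_ne t 0 with rfl | ht0
    · simp at hpF
      exact hx.2 hpF
    · apply hwBad
      rw [hBad]
      apply Set.mem_biUnion hpF
      left
      rw [hL]
      refine ⟨t⁻¹, ?_⟩
      simp only [add_sub_cancel_left]
      rw [smul_smul, inv_mul_cancel₀ ht0, one_smul]
      ring
  have hsegy : segment ℝ y w ⊆ U \ (F : Set ℂ) := by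
    intro p hp
    refine ⟨hUc.segment_subset hy.1 hwU hp, ?_⟩
    intro hpF
    rw [segment_eq_image'] at hp
    obtain ⟨t, ht, rfl⟩ := hp
    rcases eq_or_ne t 0 with rfl | ht0
    · simp at hpF
      exact hy.2 hpF
    · apply hwBad
      rw [hBad]
      apply Set.mem_biUnion hpF
      right
      rw [hL]
      refine ⟨t⁻¹, ?_⟩
      simp only [add_sub_cancel_left]
      rw [smul_smul, inv_mul_cancel₀ ht0, one_smul]
      ring
  have J1 : JoinedIn (U \ (F : Set ℂ)) x w := by
    have hpc := (convex_segment x w).isPathConnected ⟨x, left_mem_segment ℝ x w⟩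
    exact (hpc.joinedIn x (left_mem_segment ℝ x w) w (right_mem_segment ℝ x w)).mono hsegx
  have J2 : JoinedIn (U \ (F : Set ℂ)) y w := by
    have hpc := (convex_segment y w).isPathConnected ⟨y, left_mem_segment ℝ y w⟩
    exact (hpc.joinedIn y (left_mem_segment ℝ y w) w (right_mem_segment ℝ y w)).mono hsegy
  exact J1.trans J2.symm

lemma convex_open_diff_finite_preconnected (U : Set ℂ) (hUc : Convex ℝ U) (hUo : IsOpen U)
    (F : Finset ℂ) : IsPreconnected (U \ (F : Set ℂ)) := by
  rcases Set.eq_empty_or_nonempty (U \ (F : Set ℂ)) with h | ⟨x₀, hx₀⟩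
  · rw [h]; exact isPreconnected_empty
  · have : IsPathConnected (U \ (F : Set ℂ)) :=
      ⟨x₀, hx₀, fun {y} hy => convex_open_diff_finite_joined U hUc hUo F hx₀ hy⟩
    exact this.isConnected.isPreconnected

-- conjugate-reflection differentiability
lemma diff_conj_conj {f : ℂ → ℂ} {s : Set ℂ} (hs : IsOpen s) (hf : DifferentiableOn ℂ f s) :
    DifferentiableOn ℂ (fun z => (starRingEnd ℂ) (f ((starRingEnd ℂ) z)))
      ((starRingEnd ℂ) ⁻¹' s) := by
  intro z₀ hz₀
  apply DifferentiableAt.differentiableWithinAt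
  have hw₀ : (starRingEnd ℂ) z₀ ∈ s := hz₀
  have hfd : DifferentiableAt ℂ f ((starRingEnd ℂ) z₀) :=
    hf.differentiableAt (hs.mem_nhds hw₀)
  set d : ℂ := deriv f ((starRingEnd ℂ) z₀) with hd
  have hder : HasDerivAt f d ((starRingEnd ℂ) z₀) := hfd.hasDerivAt
  have key : HasDerivAt (fun z => (starRingEnd ℂ) (f ((starRingEnd ℂ) z)))
      ((starRingEnd ℂ) d) z₀ := by
    rw [hasDerivAt_iff_tendsto]
    have h := hasDerivAt_iff_tendsto.1 hder
    have heq : (fun z : ℂ => ‖z - z₀‖⁻¹ *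
          ‖(starRingEnd ℂ) (f ((starRingEnd ℂ) z)) - (starRingEnd ℂ) (f ((starRingEnd ℂ) z₀))
            - (z - z₀) • (starRingEnd ℂ) d‖)
        = (fun w : ℂ => ‖w - (starRingEnd ℂ) z₀‖⁻¹ *
            ‖f w - f ((starRingEnd ℂ) z₀) - (w - (starRingEnd ℂ) z₀) • d‖)
          ∘ (starRingEnd ℂ) := by
      funext ζ
      simp only [Function.comp_apply]
      congr 1
      · rw [← map_sub, RCLike.norm_conj]
      · have hA : (starRingEnd ℂ) ((starRingEnd ℂ) (f ((starRingEnd ℂ) ζ))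
              - (starRingEnd ℂ) (f ((starRingEnd ℂ) z₀)) - (ζ - z₀) • (starRingEnd ℂ) d)
            = f ((starRingEnd ℂ) ζ) - f ((starRingEnd ℂ) z₀)
              - ((starRingEnd ℂ) ζ - (starRingEnd ℂ) z₀) • d := by
          simp only [map_sub, Complex.conj_conj, smul_eq_mul, map_mul]
        rw [← hA, RCLike.norm_conj]
    rw [heq]
    exact h.comp ((Complex.continuous_conj).tendsto z₀)
  exact key.differentiableAt

lemma isOpen_offReal (P : Finset ℂ) : IsOpen ({z : ℂ | z.im ≠ 0} \ (P : Set ℂ)) := by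
  apply IsOpen.sdiff
  · exact isOpen_ne_fun Complex.continuous_im continuous_const
  · exact (P : Set ℂ).toFinite.isClosed

lemma upper_vanish (E : ℂ → ℂ) (P : Finset ℂ)
    (hE : DifferentiableOn ℂ E ({z : ℂ | z.im ≠ 0} \ (P : Set ℂ)))
    (M R : ℝ) (hbd : ∀ z : ℂ, z.im ≠ 0 → R < ‖z‖ → ‖E z‖ ≤ M)
    (b : ℝ) (hb : 0 < b) (N₂ : ℕ)
    (hzero : ∀ n : ℕ, N₂ ≤ n → E (I * ((b:ℂ) * n)) = 0) :
    ∀ z : ℂ, 0 < z.im → z ∉ P → E z = 0 := by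
  -- bound the poles
  obtain ⟨C, hC⟩ := ((P : Set ℂ).toFinite.isBounded).subset_closedBall 0
  have hCp : ∀ p ∈ P, ‖p‖ ≤ C := by
    intro p hp
    have := hC hp
    rwa [Metric.mem_closedBall, dist_zero_right] at this
  set R' : ℝ := max (max R C) 1 + 1 with hR'def
  have hR'R : R < R' := by
    have : R ≤ max (max R C) 1 := le_trans (le_max_left _ _) (le_max_left _ _)
    linarith
  have hR'C : C < R' := by
    have : C ≤ max (max R C) 1 := le_trans (le_max_right _ _) (le_max_left _ _)
    linarith
  have hR'1 : 1 < R' := by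
    have : (1:ℝ) ≤ max (max R C) 1 := le_max_right _ _
    linarith
  have hR'0 : 0 < R' := by linarith
  -- the pulled-back function on the half-disc
  set f : ℂ → ℂ := fun ζ => E (-(R':ℂ)/ζ) with hfdef
  have hmap : ∀ ζ ∈ HD, ((-(R':ℂ)/ζ).im ≠ 0 ∧ R' < ‖-(R':ℂ)/ζ‖ ∧ -(R':ℂ)/ζ ∉ (P : Set ℂ)) := by
    intro ζ hζ
    have hζ0 : ζ ≠ 0 := by
      intro h
      rw [h] at hζ
      have := hζ.1
      simp at this
    have hζn : 0 < ‖ζ‖ := norm_pos_iff.2 hζ0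
    have him : 0 < (-(R':ℂ)/ζ).im := by
      have h1 : -(R':ℂ)/ζ = ((-R' : ℝ):ℂ) * ζ⁻¹ := by
        push_cast; rw [div_eq_mul_inv]
      rw [h1, Complex.mul_im, Complex.ofReal_re, Complex.ofReal_im, Complex.inv_im]
      have h2 : 0 < normSq ζ := Complex.normSq_pos.2 hζ0
      have h3 := hζ.1
      have h4 : -R' * (-ζ.im / normSq ζ) = R' * ζ.im / normSq ζ := by ring
      rw [h4]
      have h5 : (0:ℝ) * ζ⁻¹.re = 0 := by ring
      rw [h5, add_zero]
      positivity
    have hnorm : R' < ‖-(R':ℂ)/ζ‖ := by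
      rw [norm_div, norm_neg, Complex.norm_real, Real.norm_eq_abs, _root_.abs_of_nonneg hR'0.le]
      rw [lt_div_iff₀ hζn]
      nlinarith [hζ.2]
    exact ⟨ne_of_gt him, hnorm, fun hp => absurd (hCp _ hp) (by linarith)⟩
  have hfd : DifferentiableOn ℂ f HD := by
    apply DifferentiableOn.comp hE
    · intro ζ hζ
      apply DifferentiableAt.differentiableWithinAt
      apply DifferentiableAt.div (differentiableAt_const _) differentiableAt_id
      intro h
      rw [h] at hζ
      have := hζ.1
      simp at this
    · intro ζ hζ
      obtain ⟨h1, h2, h3⟩ := hmap ζ hζ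
      exact ⟨h1, h3⟩
  have hfM : ∀ ζ ∈ HD, ‖f ζ‖ ≤ M := by
    intro ζ hζ
    obtain ⟨h1, h2, h3⟩ := hmap ζ hζ
    exact hbd _ h1 (lt_trans hR'R h2)
  -- zeros of f
  set c : ℝ := R'/b with hcdef
  have hc0 : 0 < c := by positivity
  set N₁ : ℕ := max (max N₂ 1) ⌈(5/2)*c⌉₊ + 1 with hN₁def
  have hN₁pos : 0 < N₁ := by omega
  have hN₁N₂ : N₂ ≤ N₁ := by
    have : N₂ ≤ max (max N₂ 1) ⌈(5/2)*c⌉₊ := le_trans (le_max_left _ _) (le_max_left _ _)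
    omega
  have hsmall : c/N₁ ≤ 2/5 := by
    have h1 : (5/2)*c ≤ ⌈(5/2)*c⌉₊ := Nat.le_ceil _
    have h2 : ⌈(5/2)*c⌉₊ ≤ N₁ := by omega
    have h2' : (⌈(5/2)*c⌉₊ : ℝ) ≤ (N₁ : ℝ) := Nat.cast_le.2 h2
    have hN₁r : (5/2)*c ≤ (N₁:ℝ) := le_trans h1 h2'
    rw [div_le_iff₀ (by positivity : (0:ℝ) < (N₁:ℝ))]
    linarith
  have hfz : ∀ n : ℕ, N₁ ≤ n → f (I*((c:ℂ)/n)) = 0 := by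
    intro n hn
    have hn0 : 0 < n := lt_of_lt_of_le hN₁pos hn
    have hnr : (0:ℝ) < n := by exact_mod_cast hn0
    have harg : -(R':ℂ)/(I*((c:ℂ)/n)) = I * ((b:ℂ) * n) := by
      have hden : (I*((c:ℂ)/n)) ≠ 0 := by
        apply mul_ne_zero Complex.I_ne_zero
        apply div_ne_zero
        · exact_mod_cast Complex.ofReal_ne_zero.2 (ne_of_gt hc0)
        · exact_mod_cast Complex.ofReal_ne_zero.2 (ne_of_gt hnr)
      rw [div_eq_iff hden]
      have hnn : (n:ℂ) ≠ 0 := Nat.cast_ne_zero.mpr hn0.ne'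
      have hcb : (b:ℂ) * (c:ℂ) = (R':ℂ) := by
        have hr : b * c = R' := by rw [hcdef]; field_simp
        exact_mod_cast congrArg Complex.ofReal hr
      rw [show Complex.I*((b:ℂ)*(n:ℂ)) * (Complex.I*((c:ℂ)/(n:ℂ)))
          = (Complex.I*Complex.I) * ((b:ℂ)*(c:ℂ)) * ((n:ℂ)/(n:ℂ)) from by ring,
        Complex.I_mul_I, div_self hnn]
      linear_combination hcb
    show E (-(R':ℂ)/(I*((c:ℂ)/n))) = 0
    rw [harg]
    exact hzero n (le_trans hN₁N₂ hn)
  have hvanish := blaschke_vanish f hfd M hfM c hc0 N₁ hN₁pos hsmall hfz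
  -- E vanishes far away in the upper half plane
  have hEout : ∀ z : ℂ, 0 < z.im → R' < ‖z‖ → E z = 0 := by
    intro z hzim hzR
    have hz0 : z ≠ 0 := by
      intro h; rw [h] at hzim; simp at hzim
    have hznorm : 0 < ‖z‖ := norm_pos_iff.2 hz0
    have hζHD : -(R':ℂ)/z ∈ HD := by
      constructor
      · have h1 : -(R':ℂ)/z = ((-R' : ℝ):ℂ) * z⁻¹ := by
          push_cast; rw [div_eq_mul_inv]
        show 0 < (-(R':ℂ)/z).im
        rw [h1, Complex.mul_im, Complex.ofReal_re, Complex.ofReal_im, Complex.inv_im]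
        have h2 : 0 < normSq z := Complex.normSq_pos.2 hz0
        have h4 : -R' * (-z.im / normSq z) = R' * z.im / normSq z := by ring
        rw [h4]
        have h5 : (0:ℝ) * z⁻¹.re = 0 := by ring
        rw [h5, add_zero]
        positivity
      · show ‖-(R':ℂ)/z‖ < 1
        rw [norm_div, norm_neg, Complex.norm_real, Real.norm_eq_abs,
          _root_.abs_of_nonneg hR'0.le, div_lt_one hznorm]
        linarith
    have hback : -(R':ℂ)/(-(R':ℂ)/z) = z := by
      have hR'ne : -(R':ℂ) ≠ 0 := by
        simp only [ne_eq, neg_eq_zero]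
        exact_mod_cast Complex.ofReal_ne_zero.2 (ne_of_gt hR'0)
      field_simp
      exact div_self (by exact_mod_cast Complex.ofReal_ne_zero.2 (ne_of_gt hR'0) : (R':ℂ) ≠ 0)
    have := hvanish _ hζHD
    show E z = 0
    rw [← hback]
    exact this
  -- identity theorem on the upper half plane minus poles
  intro z hzim hzP
  have hΩpre : IsPreconnected ({z : ℂ | 0 < z.im} \ (P : Set ℂ)) :=
    convex_open_diff_finite_preconnected _ (convex_halfSpace_im_gt 0)
      (isOpen_lt continuous_const Complex.continuous_im) P
  have han : AnalyticOnNhd ℂ E ({z : ℂ | 0 < z.im} \ (P : Set ℂ)) := by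
    intro w hw
    exact (hE.analyticOnNhd (isOpen_offReal P)) w ⟨ne_of_gt hw.1, hw.2⟩
  set z₀ : ℂ := Complex.I * ((R'+1 : ℝ):ℂ) with hz₀def
  have hz₀im : z₀.im = R'+1 := by
    rw [hz₀def, Complex.mul_im]
    simp
  have hz₀norm : ‖z₀‖ = R'+1 := by
    rw [hz₀def, norm_mul, Complex.norm_I, one_mul, Complex.norm_real, Real.norm_eq_abs,
      _root_.abs_of_nonneg (by linarith)]
  have hz₀Ω : z₀ ∈ {z : ℂ | 0 < z.im} \ (P : Set ℂ) := by
    constructor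
    · show 0 < z₀.im
      rw [hz₀im]; linarith
    · intro hp
      have := hCp _ hp
      rw [hz₀norm] at this
      linarith
  have hev : E =ᶠ[𝓝 z₀] 0 := by
    have hVopen : IsOpen {z : ℂ | 0 < z.im ∧ R' < ‖z‖} :=
      (isOpen_lt continuous_const Complex.continuous_im).inter
        (isOpen_lt continuous_const continuous_norm)
    have hz₀V : z₀ ∈ {z : ℂ | 0 < z.im ∧ R' < ‖z‖} := by
      constructor
      · rw [hz₀im]; linarith
      · rw [hz₀norm]; linarith
    exact Filter.eventuallyEq_of_mem (hVopen.mem_nhds hz₀V) (fun w hw => hEout w hw.1 hw.2)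
  have heq := han.eqOn_zero_of_preconnected_of_eventuallyEq_zero hΩpre hz₀Ω hev
  exact heq ⟨hzim, hzP⟩

/-- Uniqueness of analytic continuation of a Matsubara propagator in the class of
functions vanishing at infinity and holomorphic off the real axis except for finitely
many poles. -/
theorem matsubara_uniqueness (β : ℝ) (hβ : 0 < β) (D₁ D₂ : ℂ → ℂ) (S₁ S₂ : Finset ℂ)
    (hS₁ : ∀ s ∈ S₁, s.im ≠ 0) (hS₂ : ∀ s ∈ S₂, s.im ≠ 0)
    (hol₁ : DifferentiableOn ℂ D₁ ({z : ℂ | z.im ≠ 0} \ (S₁ : Set ℂ)))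
    (hol₂ : DifferentiableOn ℂ D₂ ({z : ℂ | z.im ≠ 0} \ (S₂ : Set ℂ)))
    (hpole₁ : ∀ s ∈ S₁,
      Tendsto (fun z => ‖D₁ z‖) (𝓝[{z : ℂ | z.im ≠ 0} \ (S₁ : Set ℂ)] s) atTop)
    (hpole₂ : ∀ s ∈ S₂,
      Tendsto (fun z => ‖D₂ z‖) (𝓝[{z : ℂ | z.im ≠ 0} \ (S₂ : Set ℂ)] s) atTop)
    (hdecay₁ : ∀ ε > 0, ∃ R : ℝ, ∀ z : ℂ, z.im ≠ 0 → R < ‖z‖ → ‖D₁ z‖ < ε)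
    (hdecay₂ : ∀ ε > 0, ∃ R : ℝ, ∀ z : ℂ, z.im ≠ 0 → R < ‖z‖ → ‖D₂ z‖ < ε)
    (heq : ∀ n : ℤ, n ≠ 0 →
      D₁ (Complex.I * (2 * Real.pi * n / β)) = D₂ (Complex.I * (2 * Real.pi * n / β))) :
    (∀ z : ℂ, z.im ≠ 0 → z ∉ S₁ → z ∉ S₂ → D₁ z = D₂ z) ∧ S₁ = S₂ := by
  have hβ' : (β:ℂ) ≠ 0 := by exact_mod_cast Complex.ofReal_ne_zero.2 (ne_of_gt hβ)
  set P : Finset ℂ := S₁ ∪ S₂ with hPdef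
  set E : ℂ → ℂ := fun z => D₁ z - D₂ z with hEdef
  have hsub₁ : ({z : ℂ | z.im ≠ 0} \ (P : Set ℂ)) ⊆ ({z : ℂ | z.im ≠ 0} \ (S₁ : Set ℂ)) := by
    intro z hz
    refine ⟨hz.1, fun h => hz.2 ?_⟩
    rw [hPdef]; push_cast; exact Or.inl h
  have hsub₂ : ({z : ℂ | z.im ≠ 0} \ (P : Set ℂ)) ⊆ ({z : ℂ | z.im ≠ 0} \ (S₂ : Set ℂ)) := by
    intro z hz
    refine ⟨hz.1, fun h => hz.2 ?_⟩
    rw [hPdef]; push_cast; exact Or.inr h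
  have hEdiff : DifferentiableOn ℂ E ({z : ℂ | z.im ≠ 0} \ (P : Set ℂ)) :=
    (hol₁.mono hsub₁).sub (hol₂.mono hsub₂)
  obtain ⟨R₁, hR₁⟩ := hdecay₁ 1 one_pos
  obtain ⟨R₂, hR₂⟩ := hdecay₂ 1 one_pos
  set R : ℝ := max R₁ R₂ with hRdef
  have hbd : ∀ z : ℂ, z.im ≠ 0 → R < ‖z‖ → ‖E z‖ ≤ 2 := by
    intro z h1 h2
    have ha := hR₁ z h1 (lt_of_le_of_lt (le_max_left _ _) h2)
    have hb := hR₂ z h1 (lt_of_le_of_lt (le_max_right _ _) h2)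
    calc ‖D₁ z - D₂ z‖ ≤ ‖D₁ z‖ + ‖D₂ z‖ := norm_sub_le _ _
      _ ≤ 2 := by linarith
  set b : ℝ := 2*Real.pi/β with hbdef
  have hb0 : 0 < b := by
    have := Real.pi_pos
    positivity
  -- zeros of E at positive Matsubara points
  have hEzero : ∀ n : ℤ, n ≠ 0 → E (Complex.I * ((b:ℂ) * n)) = 0 := by
    intro n hn
    have harg : Complex.I * ((b:ℂ) * n) = Complex.I * (2 * Real.pi * n / β) := by
      congr 1
      rw [hbdef]
      push_cast
      ring
    rw [harg]
    show D₁ _ - D₂ _ = 0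
    rw [heq n hn, sub_self]
  -- upper half plane
  have hupper : ∀ z : ℂ, 0 < z.im → z ∉ (P : Set ℂ) → E z = 0 := by
    apply upper_vanish E P hEdiff 2 R hbd b hb0 1
    intro n hn
    have hn' : (n:ℤ) ≠ 0 := by exact_mod_cast Nat.one_le_iff_ne_zero.mp hn
    have := hEzero n hn'
    simpa using this
  -- lower half plane via conjugation
  set E' : ℂ → ℂ := fun z => (starRingEnd ℂ) (E ((starRingEnd ℂ) z)) with hE'def
  set P' : Finset ℂ := P.image (starRingEnd ℂ) with hP'def
  have hE'diff : DifferentiableOn ℂ E' ({z : ℂ | z.im ≠ 0} \ (P' : Set ℂ)) := by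
    have h1 := diff_conj_conj (isOpen_offReal P) hEdiff
    apply h1.mono
    intro z hz
    simp only [Set.mem_preimage]
    constructor
    · show ((starRingEnd ℂ) z).im ≠ 0
      rw [Complex.conj_im]
      simpa using hz.1
    · intro hcp
      apply hz.2
      rw [hP'def]
      have : z = (starRingEnd ℂ) ((starRingEnd ℂ) z) := by rw [Complex.conj_conj]
      rw [this]
      exact Finset.mem_coe.2 (Finset.mem_image_of_mem _ hcp)
  have hbd' : ∀ z : ℂ, z.im ≠ 0 → R < ‖z‖ → ‖E' z‖ ≤ 2 := by
    intro z h1 h2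
    rw [hE'def]
    show ‖(starRingEnd ℂ) (E ((starRingEnd ℂ) z))‖ ≤ 2
    rw [RCLike.norm_conj]
    apply hbd
    · show ((starRingEnd ℂ) z).im ≠ 0
      rw [Complex.conj_im]; simpa using h1
    · rw [RCLike.norm_conj]; exact h2
  have hE'zero : ∀ n : ℕ, 1 ≤ n → E' (Complex.I * ((b:ℂ) * n)) = 0 := by
    intro n hn
    show (starRingEnd ℂ) (E ((starRingEnd ℂ) (Complex.I * ((b:ℂ) * n)))) = 0
    have harg : (starRingEnd ℂ) (Complex.I * ((b:ℂ) * n)) = Complex.I * ((b:ℂ) * ((-n : ℤ):ℂ)) := by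
      rw [map_mul, Complex.conj_I]
      have h1 : (starRingEnd ℂ) ((b:ℂ) * n) = (b:ℂ) * n := by
        rw [map_mul, Complex.conj_ofReal, map_natCast]
      rw [h1]
      push_cast
      ring
    have hnz : (n:ℤ) ≠ 0 := by exact_mod_cast Nat.one_le_iff_ne_zero.mp hn
    rw [harg, hEzero (-n) (neg_ne_zero.2 hnz), map_zero]
  have hlower : ∀ z : ℂ, z.im < 0 → z ∉ (P : Set ℂ) → E z = 0 := by
    intro z hzim hzP
    have hcz : 0 < ((starRingEnd ℂ) z).im := by
      rw [Complex.conj_im]; linarith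
    have hczP' : (starRingEnd ℂ) z ∉ (P' : Set ℂ) := by
      intro h
      rw [hP'def] at h
      obtain ⟨p, hp, hpe⟩ := Finset.mem_image.1 (Finset.mem_coe.1 h)
      have : p = z := by
        have := congrArg (starRingEnd ℂ) hpe
        rwa [Complex.conj_conj, Complex.conj_conj] at this
      exact hzP (Finset.mem_coe.2 (this ▸ hp))
    have h0 := upper_vanish E' P' hE'diff 2 R hbd' b hb0 1 hE'zero ((starRingEnd ℂ) z) hcz hczP'
    rw [hE'def] at h0
    simp only at h0
    rw [Complex.conj_conj] at h0
    have := congrArg (starRingEnd ℂ) h0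
    rwa [Complex.conj_conj, map_zero] at this
  -- part 1
  have part1 : ∀ z : ℂ, z.im ≠ 0 → z ∉ S₁ → z ∉ S₂ → D₁ z = D₂ z := by
    intro z hzim hz1 hz2
    have hzP : z ∉ (P : Set ℂ) := by
      rw [hPdef]
      push_cast
      rintro (h | h)
      exacts [hz1 h, hz2 h]
    have : E z = 0 := by
      rcases lt_or_gt_of_ne hzim with h | h
      · exact hlower z h hzP
      · exact hupper z h hzP
    exact sub_eq_zero.1 this
  refine ⟨part1, ?_⟩
  -- part 2 : equality of pole sets
  -- a neBot filter near any point of S₁ ∪ S₂ avoiding both pole sets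
  have hFne : ∀ s : ℂ, s.im ≠ 0 →
      (𝓝[{z : ℂ | z.im ≠ 0} \ ((S₁ : Set ℂ) ∪ (S₂ : Set ℂ))] s).NeBot := by
    intro s hsim
    set T : Set ℂ := (S₁ : Set ℂ) ∪ (S₂ : Set ℂ) with hTdef
    have hTfin : T.Finite := (S₁.finite_toSet).union (S₂.finite_toSet)
    have hU : {z : ℂ | z.im ≠ 0} ∈ 𝓝 s :=
      (isOpen_ne_fun Complex.continuous_im continuous_const).mem_nhds hsim
    have h1 : {z : ℂ | z.im ≠ 0} \ T = {z : ℂ | z.im ≠ 0} ∩ Tᶜ := Set.diff_eq _ _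
    rw [h1]
    have h2 : 𝓝[{z : ℂ | z.im ≠ 0} ∩ Tᶜ] s = 𝓝[Tᶜ] s := by
      apply nhdsWithin_inter_of_mem
      exact mem_nhdsWithin_of_mem_nhds hU
    rw [h2]
    -- T minus s is closed and avoids s
    have h3 : (T \ {s})ᶜ ∈ 𝓝 s := by
      apply IsOpen.mem_nhds
      · exact hTfin.diff.isClosed.isOpen_compl
      · simp
    have h4 : 𝓝[Tᶜ] s ≥ 𝓝[(T \ {s})ᶜ ∩ {s}ᶜ] s := by
      apply nhdsWithin_mono
      intro z hz
      intro hzT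
      rcases eq_or_ne z s with rfl | hne
      · exact hz.2 rfl
      · exact hz.1 ⟨hzT, hne⟩
    have h5 : 𝓝[(T \ {s})ᶜ ∩ {s}ᶜ] s = 𝓝[{s}ᶜ] s := by
      apply nhdsWithin_inter_of_mem
      exact mem_nhdsWithin_of_mem_nhds h3
    rw [h5] at h4
    exact Filter.neBot_of_le h4
  have key : ∀ s : ℂ, s ∈ S₁ → s ∉ S₂ → False := by
    intro s hs1 hs2
    have hsim : s.im ≠ 0 := hS₁ s hs1
    have hD₂diff : DifferentiableAt ℂ D₂ s :=
      hol₂.differentiableAt ((isOpen_offReal S₂).mem_nhds ⟨hsim, fun h => hs2 (Finset.mem_coe.1 h)⟩)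
    have hD₂cont : ContinuousAt D₂ s := hD₂diff.continuousAt
    set F := 𝓝[{z : ℂ | z.im ≠ 0} \ ((S₁ : Set ℂ) ∪ (S₂ : Set ℂ))] s with hFdef
    haveI hne : F.NeBot := hFne s hsim
    have hFle : F ≤ 𝓝[{z : ℂ | z.im ≠ 0} \ (S₁ : Set ℂ)] s := by
      apply nhdsWithin_mono
      exact fun z hz => ⟨hz.1, fun h => hz.2 (Or.inl h)⟩
    have hev1 : ∀ᶠ z in F, (‖D₂ s‖ + 1) + 1 < ‖D₁ z‖ :=
      hFle ((hpole₁ s hs1) (Filter.eventually_gt_atTop _))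
    have hev2 : ∀ᶠ z in F, ‖D₂ z‖ < ‖D₂ s‖ + 1 := by
      apply Filter.Eventually.filter_mono nhdsWithin_le_nhds
      exact hD₂cont.norm.eventually_lt_const (by linarith)
    have hev3 : ∀ᶠ z in F, D₁ z = D₂ z := by
      filter_upwards [self_mem_nhdsWithin] with z hz
      exact part1 z hz.1 (fun h => hz.2 (Or.inl (Finset.mem_coe.2 h)))
        (fun h => hz.2 (Or.inr (Finset.mem_coe.2 h)))
    obtain ⟨z, h1, h2, h3⟩ := (hev1.and (hev2.and hev3)).exists
    rw [h3] at h1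
    linarith
  have key' : ∀ s : ℂ, s ∈ S₂ → s ∉ S₁ → False := by
    intro s hs2 hs1
    have hsim : s.im ≠ 0 := hS₂ s hs2
    have hD₁diff : DifferentiableAt ℂ D₁ s :=
      hol₁.differentiableAt ((isOpen_offReal S₁).mem_nhds ⟨hsim, fun h => hs1 (Finset.mem_coe.1 h)⟩)
    have hD₁cont : ContinuousAt D₁ s := hD₁diff.continuousAt
    set F := 𝓝[{z : ℂ | z.im ≠ 0} \ ((S₁ : Set ℂ) ∪ (S₂ : Set ℂ))] s with hFdef
    haveI hne : F.NeBot := hFne s hsim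
    have hFle : F ≤ 𝓝[{z : ℂ | z.im ≠ 0} \ (S₂ : Set ℂ)] s := by
      apply nhdsWithin_mono
      exact fun z hz => ⟨hz.1, fun h => hz.2 (Or.inr h)⟩
    have hev1 : ∀ᶠ z in F, (‖D₁ s‖ + 1) + 1 < ‖D₂ z‖ :=
      hFle ((hpole₂ s hs2) (Filter.eventually_gt_atTop _))
    have hev2 : ∀ᶠ z in F, ‖D₁ z‖ < ‖D₁ s‖ + 1 := by
      apply Filter.Eventually.filter_mono nhdsWithin_le_nhds
      exact hD₁cont.norm.eventually_lt_const (by linarith)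
    have hev3 : ∀ᶠ z in F, D₁ z = D₂ z := by
      filter_upwards [self_mem_nhdsWithin] with z hz
      exact part1 z hz.1 (fun h => hz.2 (Or.inl (Finset.mem_coe.2 h)))
        (fun h => hz.2 (Or.inr (Finset.mem_coe.2 h)))
    obtain ⟨z, h1, h2, h3⟩ := (hev1.and (hev2.and hev3)).exists
    rw [← h3] at h1
    linarith
  ext s
  constructor
  · intro hs1
    by_contra hs2
    exact key s hs1 hs2
  · intro hs2
    by_contra hs1
    exact key' s hs2 hs1
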